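/- The ring of C₃-invariant polynomials ℤ[X,Y,Z]^{C₃}, where C₃ acts by cyclically permuting X, Y, Z, is generated as a ℤ-algebra by e₁ = X+Y+Z, e₂ = XY+YZ+ZX, e₃ = XYZ, and δ = X²Y + Y²Z + Z²X. -/

import Mathlib

open MvPolynomial

namespace CyclicInvAux

noncomputable abbrev P3 := MvPolynomial (Fin 3) ℤ

/-- Substitution sending variable `j` to variable `i`. -/
noncomputable def sb (i j : Fin 3) : P3 →ₐ[ℤ] P3 :=
  aeval (fun k => if k = j then X i else X k)

lemma sb_X (i j k : Fin 3) : sb i j (X k) = if k = j then X i else X k := by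
  simp [sb]

lemma dvd_sub_sb (i j : Fin 3) (f : P3) : (X i - X j) ∣ (f - sb i j f) := by
  induction f using MvPolynomial.induction_on with
  | C a => simp [sb]
  | add p q hp hq =>
      have h : p + q - sb i j (p + q) = (p - sb i j p) + (q - sb i j q) := by
        rw [map_add]; ring
      rw [h]; exact dvd_add hp hq
  | mul_X p k hp =>
      have h : p * X k - sb i j (p * X k) =
          (p - sb i j p) * X k + sb i j p * (X k - sb i j (X k)) := by
        rw [map_mul]; ring
      rw [h]
      refine dvd_add (hp.mul_right _) (Dvd.dvd.mul_left ?_ _)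
      by_cases hk : k = j
      · have : X k - sb i j (X k) = -(X i - X j) := by
          rw [sb_X, if_pos hk, hk]; ring
        rw [this]; exact (dvd_neg).mpr dvd_rfl
      · rw [sb_X, if_neg hk, sub_self]
        exact dvd_zero _

lemma dvd_of_sb_eq_zero {i j : Fin 3} {f : P3} (h : sb i j f = 0) :
    (X i - X j) ∣ f := by
  have := dvd_sub_sb i j f
  rwa [h, sub_zero] at this

lemma sb_rename_swap (i j : Fin 3) (hij : i ≠ j) (f : P3) :
    sb i j (rename (⇑(Equiv.swap i j)) f) = sb i j f := by
  show aeval _ _ = aeval _ f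
  rw [aeval_rename]
  have hfun : ((fun k => if k = j then X i else X k) ∘ ⇑(Equiv.swap i j)) =
      (fun k : Fin 3 => if k = j then (X i : P3) else X k) := by
    funext k
    simp only [Function.comp]
    rcases eq_or_ne k i with rfl | hki
    · rw [Equiv.swap_apply_left, if_pos rfl, if_neg hij]
    · rcases eq_or_ne k j with rfl | hkj
      · rw [Equiv.swap_apply_right, if_pos rfl, if_neg hij]
      · rw [Equiv.swap_apply_of_ne_of_ne hki hkj]
  rw [hfun]

lemma sb_eq_zero_of_antisym {i j : Fin 3} (hij : i ≠ j) {g : P3}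
    (hg : rename (⇑(Equiv.swap i j)) g = -g) : sb i j g = 0 := by
  have h1 : sb i j g = - sb i j g := by
    conv_lhs => rw [← sb_rename_swap i j hij g, hg, map_neg]
  have h2 : (2 : P3) * sb i j g = 0 := by
    linear_combination h1
  rcases mul_eq_zero.mp h2 with h | h
  · exact absurd h two_ne_zero
  · exact h

lemma X_sub_ne {i j : Fin 3} (hij : i ≠ j) : (X i - X j : P3) ≠ 0 :=
  sub_ne_zero.mpr (fun h => hij (MvPolynomial.X_injective h))

lemma esymm1 : esymm (Fin 3) ℤ 1 = X 0 + X 1 + X 2 := by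
  rw [esymm_one, Fin.sum_univ_three]

lemma esymm2 : esymm (Fin 3) ℤ 2 = X 0 * X 1 + X 1 * X 2 + X 2 * X 0 := by
  have h : Finset.powersetCard 2 (Finset.univ : Finset (Fin 3)) =
      {{0,1},{0,2},{1,2}} := by decide
  rw [esymm, h]
  rw [show ({{0,1},{0,2},{1,2}} : Finset (Finset (Fin 3))) =
    insert {0,1} (insert {0,2} {{1,2}}) from rfl]
  rw [Finset.sum_insert (by decide), Finset.sum_insert (by decide), Finset.sum_singleton]
  rw [show ({0,1} : Finset (Fin 3)) = insert 0 {1} from rfl,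
    Finset.prod_insert (by decide), Finset.prod_singleton]
  rw [show ({0,2} : Finset (Fin 3)) = insert 0 {2} from rfl,
    Finset.prod_insert (by decide), Finset.prod_singleton]
  rw [show ({1,2} : Finset (Fin 3)) = insert 1 {2} from rfl,
    Finset.prod_insert (by decide), Finset.prod_singleton]
  ring

lemma esymm3 : esymm (Fin 3) ℤ 3 = X 0 * X 1 * X 2 := by
  have h : Finset.powersetCard 3 (Finset.univ : Finset (Fin 3)) =
      {{0,1,2}} := by decide
  rw [esymm, h, Finset.sum_singleton]
  rw [show ({0,1,2} : Finset (Fin 3)) = insert 0 (insert 1 {2}) from rfl,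
    Finset.prod_insert (by decide), Finset.prod_insert (by decide), Finset.prod_singleton]
  ring

/-- Symmetric polynomials lie in the adjoin of the four generators. -/
lemma symm_mem {p : P3} (hp : p.IsSymmetric) :
    p ∈ Algebra.adjoin ℤ
      ({X 0 + X 1 + X 2,
        X 0 * X 1 + X 1 * X 2 + X 2 * X 0,
        X 0 * X 1 * X 2,
        X 0 ^ 2 * X 1 + X 1 ^ 2 * X 2 + X 2 ^ 2 * X 0} : Set P3) := by
  obtain ⟨q, hq⟩ := esymmAlgHom_surjective (σ := Fin 3) (n := 3) ℤ (by simp) ⟨p, hp⟩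
  have hq' : p = aeval (fun i : Fin 3 => esymm (Fin 3) ℤ ((i : ℕ) + 1)) q := by
    have := congrArg Subtype.val hq
    rw [esymmAlgHom_apply] at this
    exact this.symm
  rw [hq']
  have hmem : aeval (fun i : Fin 3 => esymm (Fin 3) ℤ ((i : ℕ) + 1)) q ∈
      (aeval (fun i : Fin 3 => esymm (Fin 3) ℤ ((i : ℕ) + 1)) :
        MvPolynomial (Fin 3) ℤ →ₐ[ℤ] P3).range := ⟨q, rfl⟩
  rw [← Algebra.adjoin_range_eq_range_aeval] at hmem
  refine Algebra.adjoin_mono ?_ hmem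
  rintro x ⟨i, rfl⟩
  fin_cases i
  · show esymm (Fin 3) ℤ 1 ∈ _
    rw [esymm1]
    exact Set.mem_insert _ _
  · show esymm (Fin 3) ℤ 2 ∈ _
    rw [esymm2]
    exact Set.mem_insert_of_mem _ (Set.mem_insert _ _)
  · show esymm (Fin 3) ℤ 3 ∈ _
    rw [esymm3]
    exact Set.mem_insert_of_mem _ (Set.mem_insert_of_mem _ (Set.mem_insert _ _))

end CyclicInvAux

open CyclicInvAux in
open MvPolynomial in
theorem cyclic_invariants_generators :
    (Algebra.adjoin ℤ
      ({X 0 + X 1 + X 2,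
        X 0 * X 1 + X 1 * X 2 + X 2 * X 0,
        X 0 * X 1 * X 2,
        X 0 ^ 2 * X 1 + X 1 ^ 2 * X 2 + X 2 ^ 2 * X 0} :
        Set (MvPolynomial (Fin 3) ℤ)) : Set (MvPolynomial (Fin 3) ℤ)) =
    {f : MvPolynomial (Fin 3) ℤ | rename (⇑(finRotate 3)) f = f} := by
  classical
  have c0 : (finRotate 3) (0 : Fin 3) = 1 := by decide
  have c1 : (finRotate 3) (1 : Fin 3) = 2 := by decide
  have c2 : (finRotate 3) (2 : Fin 3) = 0 := by decide
  set c : Equiv.Perm (Fin 3) := finRotate 3 with hc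
  set τ : Equiv.Perm (Fin 3) := Equiv.swap 1 2 with hτ
  have t0 : τ (0 : Fin 3) = 0 := by decide
  have t1 : τ (1 : Fin 3) = 2 := by decide
  have t2 : τ (2 : Fin 3) = 1 := by decide
  apply Set.Subset.antisymm
  · -- adjoin ⊆ invariants
    have hsub : Algebra.adjoin ℤ
        ({X 0 + X 1 + X 2,
          X 0 * X 1 + X 1 * X 2 + X 2 * X 0,
          X 0 * X 1 * X 2,
          X 0 ^ 2 * X 1 + X 1 ^ 2 * X 2 + X 2 ^ 2 * X 0} :
          Set (MvPolynomial (Fin 3) ℤ)) ≤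
        AlgHom.equalizer
          (rename (⇑c) : MvPolynomial (Fin 3) ℤ →ₐ[ℤ] MvPolynomial (Fin 3) ℤ)
          (AlgHom.id ℤ (MvPolynomial (Fin 3) ℤ)) := by
      rw [Algebra.adjoin_le_iff]
      rintro p hp
      simp only [Set.mem_insert_iff, Set.mem_singleton_iff] at hp
      rcases hp with rfl | rfl | rfl | rfl <;>
      · show rename (⇑c) _ = _
        simp only [map_add, map_mul, map_pow, rename_X, c0, c1, c2, AlgHom.id_apply]
        ring
    intro x hx
    exact (hsub hx : rename (⇑c) x = x)
  · -- invariants ⊆ adjoin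
    intro f hf
    have hf : rename (⇑c) f = f := hf
    have hττ : (⇑τ) ∘ (⇑τ) = id := by funext k; revert k; decide
    have hcmp : (⇑c) ∘ (⇑τ) = (⇑τ) ∘ ((⇑c) ∘ (⇑c)) := by funext k; revert k; decide
    have hsw01 : (⇑(Equiv.swap (0 : Fin 3) 1)) = (⇑c) ∘ (⇑τ) := by funext k; revert k; decide
    have hsw02 : (⇑(Equiv.swap (0 : Fin 3) 2)) = (⇑τ) ∘ (⇑c) := by funext k; revert k; decide
    have hτf : rename (⇑c) (rename (⇑τ) f) = rename (⇑τ) f := by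
      rw [rename_rename, hcmp, ← Function.comp_assoc, ← rename_rename, ← rename_rename, hf, hf]
    set s : MvPolynomial (Fin 3) ℤ := f + rename (⇑τ) f with hs
    set g : MvPolynomial (Fin 3) ℤ := f - rename (⇑τ) f with hg
    have hgc : rename (⇑c) g = g := by rw [hg, map_sub, hf, hτf]
    have hgτ : rename (⇑τ) g = -g := by
      rw [hg, map_sub, rename_rename, hττ, rename_id, AlgHom.id_apply]; ring
    have hsc : rename (⇑c) s = s := by rw [hs, map_add, hf, hτf]
    have hsτ : rename (⇑τ) s = s := by
      rw [hs, map_add, rename_rename, hττ, rename_id, AlgHom.id_apply]; ring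
    have hg01 : rename (⇑(Equiv.swap (0 : Fin 3) 1)) g = -g := by
      rw [hsw01, ← rename_rename, hgτ, map_neg, hgc]
    have hg02 : rename (⇑(Equiv.swap (0 : Fin 3) 2)) g = -g := by
      rw [hsw02, ← rename_rename, hgc, hgτ]
    have z01 : sb 0 1 g = 0 := sb_eq_zero_of_antisym (by decide) hg01
    have z12 : sb 1 2 g = 0 := sb_eq_zero_of_antisym (by decide) hgτ
    have z02 : sb 0 2 g = 0 := sb_eq_zero_of_antisym (by decide) hg02
    have hX01 : (X 0 - X 1 : MvPolynomial (Fin 3) ℤ) ≠ 0 := X_sub_ne (by decide)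
    have hX10 : (X 1 - X 0 : MvPolynomial (Fin 3) ℤ) ≠ 0 := X_sub_ne (by decide)
    obtain ⟨h1, hh1⟩ := dvd_of_sb_eq_zero z01
    have hz1 : sb 1 2 h1 = 0 := by
      have e1 : sb 1 2 (X 0 - X 1 : MvPolynomial (Fin 3) ℤ) = X 0 - X 1 := by
        rw [map_sub, sb_X, sb_X, if_neg (show ¬(0 : Fin 3) = 2 by decide),
          if_neg (show ¬(1 : Fin 3) = 2 by decide)]
      rw [hh1, map_mul, e1] at z12
      rcases mul_eq_zero.mp z12 with h | h
      · exact absurd h hX01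
      · exact h
    obtain ⟨h2, hh2⟩ := dvd_of_sb_eq_zero hz1
    have hz2 : sb 0 2 h2 = 0 := by
      have e1 : sb 0 2 (X 0 - X 1 : MvPolynomial (Fin 3) ℤ) = X 0 - X 1 := by
        rw [map_sub, sb_X, sb_X, if_neg (show ¬(0 : Fin 3) = 2 by decide),
          if_neg (show ¬(1 : Fin 3) = 2 by decide)]
      have e2 : sb 0 2 (X 1 - X 2 : MvPolynomial (Fin 3) ℤ) = X 1 - X 0 := by
        rw [map_sub, sb_X, sb_X, if_neg (show ¬(1 : Fin 3) = 2 by decide),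
          if_pos (show (2 : Fin 3) = 2 from rfl)]
      rw [hh1, hh2, map_mul, map_mul, e1, e2] at z02
      rcases mul_eq_zero.mp z02 with h | h
      · exact absurd h hX01
      · rcases mul_eq_zero.mp h with h' | h'
        · exact absurd h' hX10
        · exact h'
    obtain ⟨h, hh3⟩ := dvd_of_sb_eq_zero hz2
    set V : MvPolynomial (Fin 3) ℤ := (X 0 - X 1) * (X 1 - X 2) * (X 0 - X 2) with hV
    have hgV : g = V * h := by rw [hh1, hh2, hh3, hV]; ring
    have hVne : V ≠ 0 := by
      rw [hV]
      have a1 : (X 0 - X 1 : MvPolynomial (Fin 3) ℤ) ≠ 0 := X_sub_ne (by decide)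
      have a2 : (X 1 - X 2 : MvPolynomial (Fin 3) ℤ) ≠ 0 := X_sub_ne (by decide)
      have a3 : (X 0 - X 2 : MvPolynomial (Fin 3) ℤ) ≠ 0 := X_sub_ne (by decide)
      exact mul_ne_zero (mul_ne_zero a1 a2) a3
    have hrcV : rename (⇑c) V = V := by
      rw [hV]
      simp only [map_mul, map_sub, rename_X, c0, c1, c2]
      ring
    have hrτV : rename (⇑τ) V = -V := by
      rw [hV]
      simp only [map_mul, map_sub, rename_X, t0, t1, t2]
      ring
    have hch : rename (⇑c) h = h := by
      have key : V * rename (⇑c) h = V * h := by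
        have := hgc
        rw [hgV, map_mul, hrcV] at this
        exact this
      exact mul_left_cancel₀ hVne key
    have hτh : rename (⇑τ) h = h := by
      have key : V * rename (⇑τ) h = V * h := by
        have := hgτ
        rw [hgV, map_mul, hrτV] at this
        have : V * rename (⇑τ) h = V * h := by
          have h' := this
          rw [neg_mul] at h'
          exact neg_injective h'
        exact this
      exact mul_left_cancel₀ hVne key
    -- all permutations are words in c and τ
    have hlist : ∀ π : Equiv.Perm (Fin 3),
        π = 1 ∨ π = c ∨ π = c * c ∨ π = τ ∨ π = τ * c ∨ π = τ * (c * c) := by decide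
    have hall : ∀ (q : MvPolynomial (Fin 3) ℤ), rename (⇑c) q = q → rename (⇑τ) q = q →
        q.IsSymmetric := by
      intro q hqc hqτ π
      rcases hlist π with rfl | rfl | rfl | rfl | rfl | rfl
      · rw [Equiv.Perm.coe_one, rename_id, AlgHom.id_apply]
      · exact hqc
      · rw [Equiv.Perm.coe_mul, ← rename_rename, hqc, hqc]
      · exact hqτ
      · rw [Equiv.Perm.coe_mul, ← rename_rename, hqc, hqτ]
      · rw [Equiv.Perm.coe_mul, Equiv.Perm.coe_mul, ← rename_rename, ← rename_rename,
          hqc, hqc, hqτ]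
    have hsymh : h.IsSymmetric := hall h hch hτh
    -- the main algebraic identity
    set δ : MvPolynomial (Fin 3) ℤ := X 0 ^ 2 * X 1 + X 1 ^ 2 * X 2 + X 2 ^ 2 * X 0 with hδ
    set m : MvPolynomial (Fin 3) ℤ :=
      (X 0 + X 1 + X 2) * (X 0 * X 1 + X 1 * X 2 + X 2 * X 0) - 3 * (X 0 * X 1 * X 2) with hm
    have hVδ : V = 2 * δ - m := by rw [hV, hδ, hm]; ring
    have hrcm : rename (⇑c) m = m := by
      rw [hm]
      simp only [map_sub, map_mul, map_add, map_ofNat, rename_X, c0, c1, c2]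
      ring
    have hrτm : rename (⇑τ) m = m := by
      rw [hm]
      simp only [map_sub, map_mul, map_add, map_ofNat, rename_X, t0, t1, t2]
      ring
    set p : MvPolynomial (Fin 3) ℤ := f - δ * h with hp
    have key : (2 : MvPolynomial (Fin 3) ℤ) * p = s - m * h := by
      rw [hp, hs]
      have hg' := hgV
      rw [hg] at hg'
      rw [hVδ] at hg'
      linear_combination hg'
    have hpc : rename (⇑c) p = p := by
      have h2 : (2 : MvPolynomial (Fin 3) ℤ) * rename (⇑c) p =
          (2 : MvPolynomial (Fin 3) ℤ) * p :=
        calc (2 : MvPolynomial (Fin 3) ℤ) * rename (⇑c) p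
            = rename (⇑c) (2 * p) := by rw [map_mul, map_ofNat]
          _ = rename (⇑c) (s - m * h) := by rw [key]
          _ = s - m * h := by rw [map_sub, map_mul, hsc, hrcm, hch]
          _ = 2 * p := key.symm
      exact mul_left_cancel₀ two_ne_zero h2
    have hpτ : rename (⇑τ) p = p := by
      have h2 : (2 : MvPolynomial (Fin 3) ℤ) * rename (⇑τ) p =
          (2 : MvPolynomial (Fin 3) ℤ) * p :=
        calc (2 : MvPolynomial (Fin 3) ℤ) * rename (⇑τ) p
            = rename (⇑τ) (2 * p) := by rw [map_mul, map_ofNat]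
          _ = rename (⇑τ) (s - m * h) := by rw [key]
          _ = s - m * h := by rw [map_sub, map_mul, hsτ, hrτm, hτh]
          _ = 2 * p := key.symm
      exact mul_left_cancel₀ two_ne_zero h2
    have hsymp : p.IsSymmetric := hall p hpc hpτ
    have hfeq : f = p + δ * h := by rw [hp]; ring
    rw [SetLike.mem_coe, hfeq]
    refine Subalgebra.add_mem _ (symm_mem hsymp) (Subalgebra.mul_mem _ ?_ (symm_mem hsymh))
    exact Algebra.subset_adjoin (by rw [hδ]; simp)
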